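/- Let Q : [0, ∞) → ℝ be continuously differentiable, non-increasing, bounded below by μ₁ > 0, with dQ/dt = -2νQ(Λ(t) - Q(t)) where ν > 0, Λ continuous, Λ(t) ≥ Q(t). If additionally dQ/dt converges as t → ∞ (e.g., is uniformly continuous), then lim_{t→∞} (Λ(t) - Q(t)) = 0; in particular lim_{t→∞} Λ(t) = lim_{t→∞} Q(t). -/

import Mathlib

open Filter Topology

/-- if moreover `Q'` converges as `t → ∞`, then `Λ(t) - Q(t) → 0`, so `Λ` has the
same limit as `Q`. -/
theorem dissipation_quotient_same_limit (ν μ₁ : ℝ) (hν : 0 < ν) (hμ : 0 < μ₁)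
    (Q Λ : ℝ → ℝ) (hQc : Continuous Q) (hΛc : Continuous Λ)
    (hmono : ∀ s t : ℝ, 0 ≤ s → s ≤ t → Q t ≤ Q s)
    (hQlb : ∀ t : ℝ, 0 ≤ t → μ₁ ≤ Q t)
    (hQd : ∀ t : ℝ, 0 ≤ t → HasDerivAt Q (-2 * ν * Q t * (Λ t - Q t)) t)
    (hΛQ : ∀ t : ℝ, 0 ≤ t → Q t ≤ Λ t)
    (hconv : ∃ L : ℝ, Filter.Tendsto (fun t => -2 * ν * Q t * (Λ t - Q t))
      Filter.atTop (nhds L)) :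
    Filter.Tendsto (fun t => Λ t - Q t) Filter.atTop (nhds 0) ∧
    ∃ q : ℝ, Filter.Tendsto Q Filter.atTop (nhds q) ∧
      Filter.Tendsto Λ Filter.atTop (nhds q) := by
  obtain ⟨L, hL⟩ := hconv
  -- Step 1 : Q converges to q ≥ μ₁
  set f : ℝ → ℝ := fun t => Q (max t 0) with hf
  have hanti : Antitone f := fun s t hst =>
    hmono (max s 0) (max t 0) (le_max_right _ _) (max_le_max hst le_rfl)
  have hbdd : BddBelow (Set.range f) := ⟨μ₁, by
    rintro x ⟨t, rfl⟩; exact hQlb _ (le_max_right _ _)⟩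
  set q : ℝ := ⨅ t, f t with hq
  have hfq : Tendsto f atTop (𝓝 q) := tendsto_atTop_ciInf hanti hbdd
  have hQq : Tendsto Q atTop (𝓝 q) := by
    refine hfq.congr' ?_
    filter_upwards [eventually_ge_atTop (0 : ℝ)] with t ht
    simp [hf, max_eq_left ht]
  have hμq : μ₁ ≤ q := le_ciInf fun t => hQlb _ (le_max_right _ _)
  have hqpos : 0 < q := lt_of_lt_of_le hμ hμq
  -- Step 2 : Λ - Q converges to M := L / (-(2*ν*q))
  have hden : Tendsto (fun t => -2 * ν * Q t) atTop (𝓝 (-2 * ν * q)) :=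
    (tendsto_const_nhds.mul hQq)
  have hdenne : (-2 * ν * q) ≠ 0 := by
    have : 0 < 2 * ν * q := by positivity
    nlinarith
  set M : ℝ := L / (-2 * ν * q) with hM
  have hsub : Tendsto (fun t => Λ t - Q t) atTop (𝓝 M) := by
    have h := hL.div hden hdenne
    refine h.congr' ?_
    filter_upwards [eventually_ge_atTop (0 : ℝ)] with t ht
    have hQt : Q t ≠ 0 := ne_of_gt (lt_of_lt_of_le hμ (hQlb t ht))
    have hν' : ν ≠ 0 := hν.ne'
    simp only [Pi.div_apply]
    field_simp
  -- M ≥ 0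
  have hM0 : 0 ≤ M := by
    refine le_of_tendsto_of_tendsto tendsto_const_nhds hsub ?_
    filter_upwards [eventually_ge_atTop (0 : ℝ)] with t ht
    exact sub_nonneg.mpr (hΛQ t ht)
  -- M ≤ 0 (by contradiction)
  have hMle : M ≤ 0 := by
    by_contra hMpos
    push_neg at hMpos
    have hLval : L = -2 * ν * q * M := by
      rw [hM]; field_simp
    have hLneg : L < 0 := by
      have h2νq : 0 < 2 * ν * q := by positivity
      nlinarith [mul_pos h2νq hMpos]
    have hev : ∀ᶠ t in atTop, (-2 * ν * Q t * (Λ t - Q t)) < L / 2 :=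
      hL.eventually_lt_const (by linarith)
    obtain ⟨T₀, hT₀⟩ := hev.exists_forall_of_atTop
    set T := max T₀ 0 with hT
    have hT0 : (0:ℝ) ≤ T := le_max_right _ _
    set ε : ℝ := -L / 2 with hε
    have hεpos : 0 < ε := by simp [hε]; linarith
    -- g t = Q t + ε t is antitone on [T, ∞)
    set g : ℝ → ℝ := fun t => Q t + ε * t with hg
    have hganti : AntitoneOn g (Set.Ici T) := by
      refine antitoneOn_of_deriv_nonpos (convex_Ici T)
        ((hQc.add (continuous_const.mul continuous_id)).continuousOn) ?_ ?_
      · intro x hx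
        have hx' : T < x := by simpa using hx
        exact ((hQd x (le_trans hT0 hx'.le)).add
          ((hasDerivAt_id x).const_mul ε)).differentiableAt.differentiableWithinAt
      · intro x hx
        have hx' : T < x := by simpa using hx
        have hd : HasDerivAt g (-2 * ν * Q x * (Λ x - Q x) + ε) x := by
          exact ((hQd x (le_trans hT0 hx'.le)).add
            ((hasDerivAt_id' x).const_mul ε)).congr_deriv (by ring)
        rw [hd.deriv]
        have := hT₀ x (le_trans (le_max_left _ _) hx'.le)
        simp only [hε]
        linarith
    -- contradiction : Q goes below μ₁
    set t := max T ((Q T + ε * T - μ₁) / ε + 1) with ht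
    have hTt : T ≤ t := le_max_left _ _
    have h1 : g t ≤ g T := hganti (Set.self_mem_Ici) hTt hTt
    have h2 : μ₁ ≤ Q t := hQlb t (le_trans hT0 hTt)
    have h3 : (Q T + ε * T - μ₁) / ε + 1 ≤ t := le_max_right _ _
    have h4 : Q T + ε * T - μ₁ + ε ≤ ε * t := by
      have := (div_le_iff₀ hεpos).mp (by linarith : (Q T + ε * T - μ₁) / ε ≤ t - 1)
      linarith
    simp only [hg] at h1
    linarith
  have hMeq : M = 0 := le_antisymm hMle hM0
  rw [hMeq] at hsub
  refine ⟨hsub, q, hQq, ?_⟩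
  have := hsub.add hQq
  simpa using this
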